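/- Let k be a field of characteristic 0 with algebraic closure L, and let I ⊆ k[x_1,…,x_n] be a zero-dimensional ideal. Then the number of points of V_L(I) equals the rank of the symmetric bilinear form Q_1 on k[x_1,…,x_n]/I defined by Q_1(f̄, ḡ) = Tr(m_{fg}), where m_{fg} is the multiplication map by fg. -/

import Mathlib

open Module LinearMap

section Aux

variable {k A : Type} [Field k] [CharZero k] [CommRing A] [Algebra k A]
  [FiniteDimensional k A]

/-- In a finite-dimensional commutative algebra over a char-zero field, an element is in the
kernel of the trace form iff it is nilpotent. -/
lemma trace_ker_iff_nilpotent (x : A) :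
    (∀ y : A, LinearMap.trace k A (LinearMap.mulLeft k (x * y)) = 0) ↔ IsNilpotent x := by
  constructor
  · intro hx
    by_contra hnil
    -- find an idempotent e = x * y with e ≠ 0
    haveI : IsArtinian A A := isArtinian_of_tower k inferInstance
    obtain ⟨m, hm⟩ := IsArtinian.monotone_stabilizes
      (⟨fun j => OrderDual.toDual (Ideal.span {x ^ (j + 1)}), by
        intro i j hij
        simp only [OrderDual.toDual_le_toDual]
        apply Ideal.span_le.2
        simp only [Set.singleton_subset_iff, SetLike.mem_coe]
        have : x ^ (j + 1) = x ^ (i + 1) * x ^ (j - i) := by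
          rw [← pow_add]; congr 1; omega
        rw [this]
        exact Ideal.mul_mem_right _ _ (Ideal.subset_span rfl)⟩ : ℕ →o (Ideal A)ᵒᵈ)
    have hmem : x ^ (m + 1) ∈ Ideal.span {x ^ (2 * m + 2)} := by
      have := hm (2 * m + 1) (by omega)
      have h2 : Ideal.span {x ^ (m + 1)} = Ideal.span {x ^ (2 * m + 2)} := by
        exact congrArg OrderDual.ofDual this
      rw [← h2]
      exact Ideal.subset_span rfl
    obtain ⟨c, hc⟩ := Ideal.mem_span_singleton'.1 hmem
    have hpow : x ^ (2 * m + 2) = x ^ (m + 1) * x ^ (m + 1) := by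
      rw [← pow_add]; congr 1; omega
    have hc' : c * x ^ (m + 1) * x ^ (m + 1) = x ^ (m + 1) := by
      rw [mul_assoc, ← hpow, hc]
    set e := c * x ^ (m + 1) with he
    have hee : e * e = e := by
      rw [he, show c * x ^ (m + 1) * (c * x ^ (m + 1)) = c * (c * x ^ (m + 1) * x ^ (m + 1)) by
        ring, hc']
    have hse : x ^ (m + 1) * e = x ^ (m + 1) := by
      rw [he, show x ^ (m + 1) * (c * x ^ (m + 1)) = c * x ^ (m + 1) * x ^ (m + 1) by ring, hc']
    have hene : e ≠ 0 := by
      intro h0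
      apply hnil
      refine ⟨m + 1, ?_⟩
      rw [← hse, h0, mul_zero]
    have hxy : e = x * (c * x ^ m) := by rw [he, pow_succ]; ring
    have htr := hx (c * x ^ m)
    rw [← hxy] at htr
    -- trace of multiplication by a nonzero idempotent is nonzero
    have hproj : LinearMap.IsProj (LinearMap.range (LinearMap.mulLeft k e))
        (LinearMap.mulLeft k e) := by
      constructor
      · intro x; exact LinearMap.mem_range_self _ x
      · rintro x ⟨y, rfl⟩
        simp only [LinearMap.mulLeft_apply]
        rw [← mul_assoc, hee]
    rw [hproj.trace] at htr
    have hne : LinearMap.range (LinearMap.mulLeft k e) ≠ ⊥ := by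
      intro hbot
      apply hene
      have : e ∈ LinearMap.range (LinearMap.mulLeft k e) := ⟨1, by simp⟩
      rw [hbot] at this
      simpa using this
    have : finrank k (LinearMap.range (LinearMap.mulLeft k e)) ≠ 0 := by
      rw [Ne, Submodule.finrank_eq_zero]
      exact hne
    exact this (Nat.cast_injective (htr.trans (Nat.cast_zero (R := k)).symm))
  · intro hx y
    obtain ⟨j0, hj0⟩ := hx
    have hj : (x * y) ^ j0 = 0 := by rw [mul_pow, hj0, zero_mul]
    set j := j0
    have : IsNilpotent (LinearMap.mulLeft k (x * y)) :=
      ⟨j, by rw [LinearMap.pow_mulLeft, hj, LinearMap.mulLeft_zero_eq_zero]⟩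
    have := LinearMap.isNilpotent_trace_of_isNilpotent this
    exact this.eq_zero

variable (k A) in
/-- Counting algebra homomorphisms into an algebraically closed field. -/
lemma card_algHom_add_finrank_nilradical (L : Type) [Field L] [Algebra k L] [IsAlgClosed L] :
    Nat.card (A →ₐ[k] L) + finrank k ((nilradical A).restrictScalars k) = finrank k A := by
  haveI : IsArtinianRing A := isArtinian_of_tower k inferInstance
  haveI := (IsArtinianRing.setOfPred_isMaximal_finite A).to_subtype
  haveI : Fintype {I : Ideal A | I.IsMaximal} := Fintype.ofFinite _
  letI : ∀ m : {I : Ideal A | I.IsMaximal}, Field (A ⧸ m.1) :=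
    fun m => @Ideal.Quotient.field A _ m.1 m.2
  haveI hfd : ∀ m : {I : Ideal A | I.IsMaximal}, FiniteDimensional k (A ⧸ m.1) := fun m =>
    Module.Finite.of_surjective (Ideal.Quotient.mkₐ k m.1).toLinearMap
      (Ideal.Quotient.mkₐ_surjective k m.1)
  -- the infimum of the maximal ideals is the nilradical
  have hnil : (⨅ m : {I : Ideal A | I.IsMaximal}, m.1) = nilradical A := by
    rw [nilradical_eq_sInf]
    apply le_antisymm
    · apply le_sInf
      intro J hJ
      have : J.IsMaximal := (IsArtinianRing.isPrime_iff_isMaximal J).1 hJ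
      exact iInf_le_of_le ⟨J, this⟩ le_rfl
    · apply le_iInf
      intro m
      exact sInf_le m.2.isPrime
  -- the classification of algebra homs by their kernels
  have hKmax : ∀ φ : A →ₐ[k] L, (RingHom.ker φ.toRingHom).IsMaximal :=
    fun φ => (IsArtinianRing.isPrime_iff_isMaximal _).1 (RingHom.ker_isPrime _)
  let K : (A →ₐ[k] L) → {I : Ideal A | I.IsMaximal} := fun φ => ⟨RingHom.ker φ.toRingHom, hKmax φ⟩
  have E2 : ∀ m : {I : Ideal A | I.IsMaximal},
      {φ : A →ₐ[k] L // K φ = m} ≃ ((A ⧸ m.1) →ₐ[k] L) := by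
    intro m
    refine ⟨fun φ => Ideal.Quotient.liftₐ m.1 φ.1 (fun a ha => ?_),
      fun ψ => ⟨ψ.comp (Ideal.Quotient.mkₐ k m.1), ?_⟩, ?_, ?_⟩
    · have : (RingHom.ker φ.1.toRingHom : Ideal A) = m.1 := congrArg Subtype.val φ.2
      rw [← this] at ha
      exact ha
    · apply Subtype.ext
      show RingHom.ker _ = m.1
      ext a
      constructor
      · intro ha
        have : ψ (Ideal.Quotient.mk m.1 a) = 0 := ha
        have h0 : Ideal.Quotient.mk m.1 a = 0 := by
          apply RingHom.injective ψ.toRingHom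
          simpa using this
        exact (Ideal.Quotient.eq_zero_iff_mem).1 h0
      · intro ha
        show ψ (Ideal.Quotient.mk m.1 a) = 0
        rw [(Ideal.Quotient.eq_zero_iff_mem).2 ha, map_zero]
    · rintro ⟨φ, hφ⟩
      apply Subtype.ext
      ext a
      rfl
    · intro ψ
      apply AlgHom.ext
      intro x
      obtain ⟨a, rfl⟩ := Ideal.Quotient.mk_surjective x
      rfl
  let E : (A →ₐ[k] L) ≃ Σ m : {I : Ideal A | I.IsMaximal}, ((A ⧸ m.1) →ₐ[k] L) :=
    (Equiv.sigmaFiberEquiv K).symm.trans (Equiv.sigmaCongrRight E2)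
  -- compute the cardinality
  haveI : ∀ m : {I : Ideal A | I.IsMaximal}, Algebra.IsSeparable k (A ⧸ m.1) := fun m =>
    Algebra.IsSeparable.of_integral k _
  have hcard : Nat.card (A →ₐ[k] L) = ∑ m : {I : Ideal A | I.IsMaximal}, finrank k (A ⧸ m.1) := by
    rw [Nat.card_congr E, Nat.card_eq_fintype_card, Fintype.card_sigma]
    exact Finset.sum_congr rfl fun m _ => AlgHom.card k (A ⧸ m.1) L
  -- the projection onto the product of residue fields
  let Φ : A →ₐ[k] ∀ m : {I : Ideal A | I.IsMaximal}, A ⧸ m.1 :=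
    Pi.algHom k _ (fun m => Ideal.Quotient.mkₐ k m.1)
  have hker : LinearMap.ker Φ.toLinearMap = (nilradical A).restrictScalars k := by
    ext x
    simp only [LinearMap.mem_ker, Submodule.restrictScalars_mem]
    constructor
    · intro hx
      rw [← hnil]
      simp only [Submodule.mem_iInf]
      intro m
      have h0 : Ideal.Quotient.mk m.1 x = 0 := congrFun hx m
      exact (Ideal.Quotient.eq_zero_iff_mem).1 h0
    · intro hx
      rw [← hnil] at hx
      simp only [Submodule.mem_iInf] at hx
      refine funext fun m => ?_
      show Ideal.Quotient.mk m.1 x = 0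
      exact (Ideal.Quotient.eq_zero_iff_mem).2 (hx m)
  have hsurj : Function.Surjective Φ.toLinearMap := by
    have hco : Pairwise (Function.onFun IsCoprime fun m : {I : Ideal A | I.IsMaximal} => m.1) := by
      intro i j hij
      exact Ideal.isCoprime_iff_sup_eq.mpr <| i.2.coprime_of_ne j.2 <| by
        rwa [Ne, Subtype.coe_inj]
    have hs := Ideal.quotientInfToPiQuotient_surj hco
    intro y
    obtain ⟨z, hz⟩ := hs y
    obtain ⟨a, rfl⟩ := Ideal.Quotient.mk_surjective z
    refine ⟨a, ?_⟩
    rw [Ideal.quotientInfToPiQuotient_mk] at hz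
    exact hz
  have hrank := LinearMap.finrank_range_add_finrank_ker Φ.toLinearMap
  rw [hker, LinearMap.range_eq_top.2 hsurj, finrank_top] at hrank
  rw [finrank_pi_fintype k] at hrank
  rw [hcard]
  exact hrank

end Aux

set_option maxHeartbeats 1000000 in
set_option synthInstance.maxHeartbeats 200000 in
/-- the number of points of `V_L(I)` equals the rank of the symmetric bilinear
form `Q_1` on `k[X]/I` defined by `Q_1(f̄, ḡ) = Tr(m_{fg})`. -/
theorem stmt_2 (k L : Type) [Field k] [CharZero k] [Field L] [Algebra k L]
    [IsAlgClosure k L] (n : ℕ) (I : Ideal (MvPolynomial (Fin n) k))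
    [FiniteDimensional k (MvPolynomial (Fin n) k ⧸ I)]
    (B : (MvPolynomial (Fin n) k ⧸ I) →ₗ[k] (MvPolynomial (Fin n) k ⧸ I) →ₗ[k] k)
    (hB : ∀ f g : MvPolynomial (Fin n) k,
      B (Ideal.Quotient.mk I f) (Ideal.Quotient.mk I g)
        = LinearMap.trace k (MvPolynomial (Fin n) k ⧸ I)
            (LinearMap.mulLeft k (Ideal.Quotient.mk I (f * g)))) :
    Nat.card {p : Fin n → L | ∀ f ∈ I, MvPolynomial.aeval p f = 0}
      = Module.finrank k (LinearMap.range B) := by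
  haveI : IsAlgClosed L := IsAlgClosure.isAlgClosed k
  -- B on all elements
  have hB' : ∀ x y : MvPolynomial (Fin n) k ⧸ I, B x y = LinearMap.trace k (MvPolynomial (Fin n) k ⧸ I) (LinearMap.mulLeft k (x * y)) := by
    intro x y
    obtain ⟨f, rfl⟩ := Ideal.Quotient.mk_surjective x
    obtain ⟨g, rfl⟩ := Ideal.Quotient.mk_surjective y
    rw [← map_mul]
    exact hB f g
  -- kernel of B is the nilradical
  have hkerB : LinearMap.ker B
      = (nilradical (MvPolynomial (Fin n) k ⧸ I)).restrictScalars k := by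
    ext x
    simp only [LinearMap.mem_ker, Submodule.restrictScalars_mem, mem_nilradical]
    rw [← trace_ker_iff_nilpotent (k := k) x]
    constructor
    · intro hx y
      rw [← hB' x y, hx]
      rfl
    · intro hx
      apply LinearMap.ext
      intro y
      rw [hB' x y, hx y]
      rfl
  -- points are algebra homs
  have hpts : Nat.card {p : Fin n → L | ∀ f ∈ I, MvPolynomial.aeval p f = 0}
      = Nat.card ((MvPolynomial (Fin n) k ⧸ I) →ₐ[k] L) := by
    apply Nat.card_congr
    refine ⟨fun p => Ideal.Quotient.liftₐ I (MvPolynomial.aeval p.1) p.2,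
      fun φ => ⟨fun i => φ (Ideal.Quotient.mk I (MvPolynomial.X i)), ?_⟩, ?_, ?_⟩
    · intro f hf
      have key : MvPolynomial.aeval (fun i => φ (Ideal.Quotient.mk I (MvPolynomial.X i)))
          = (φ.comp (Ideal.Quotient.mkₐ k I) : MvPolynomial (Fin n) k →ₐ[k] L) := by
        rw [MvPolynomial.aeval_unique (φ.comp (Ideal.Quotient.mkₐ k I))]
        rfl
      show MvPolynomial.aeval (fun i => φ (Ideal.Quotient.mk I (MvPolynomial.X i))) f = 0
      rw [key]
      show φ (Ideal.Quotient.mk I f) = 0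
      rw [(Ideal.Quotient.eq_zero_iff_mem).2 hf, map_zero]
    · intro p
      apply Subtype.ext
      funext i
      show Ideal.Quotient.liftₐ I (MvPolynomial.aeval p.1) p.2
        (Ideal.Quotient.mk I (MvPolynomial.X i)) = p.1 i
      show MvPolynomial.aeval p.1 (MvPolynomial.X i) = p.1 i
      simp
    · intro φ
      apply AlgHom.ext
      intro x
      obtain ⟨f, rfl⟩ := Ideal.Quotient.mk_surjective x
      show MvPolynomial.aeval (fun i => φ (Ideal.Quotient.mk I (MvPolynomial.X i))) f = φ (Ideal.Quotient.mk I f)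
      have key : MvPolynomial.aeval (fun i => φ (Ideal.Quotient.mk I (MvPolynomial.X i)))
          = (φ.comp (Ideal.Quotient.mkₐ k I) : MvPolynomial (Fin n) k →ₐ[k] L) := by
        rw [MvPolynomial.aeval_unique (φ.comp (Ideal.Quotient.mkₐ k I))]
        rfl
      show MvPolynomial.aeval (fun i => φ (Ideal.Quotient.mk I (MvPolynomial.X i))) f = _
      rw [key]
      rfl
  have h1 := card_algHom_add_finrank_nilradical k (MvPolynomial (Fin n) k ⧸ I) L
  have h2 := LinearMap.finrank_range_add_finrank_ker B
  rw [hkerB] at h2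
  rw [hpts]
  omega
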